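/- Let X be a finite set of keys, let f, g : X → ℝ≥0 satisfy sum(f) > 0 and sum(g) > 0, and suppose a·g_x ≤ f_x ≤ b·g_x for all x with 0 < a ≤ b; set ρ = b/a. Fix k > 0 and let π : X → (0,1] satisfy π_x ≥ min{1, k·f_x/sum(f)} for every x. Let S include each key x independently with probability π_x and let Ŝ(g;H) = Σ_{x∈S∩H} g_x/π_x. Then for every H ⊆ X with sum(g;H) > 0, the multiplicative Chernoff-type bounds hold: Pr[|Ŝ(g;H) − sum(g;H)| > δ·sum(g;H)] ≤ 2·exp(−q^{(g)}(H)·k·ρ^{−2}·δ²/3) for 0 < δ ≤ 1, and Pr[Ŝ(g;H) − sum(g;H) > δ·sum(g;H)] ≤ exp(−q^{(g)}(H)·k·ρ^{−2}·δ/3) for δ > 1. -/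

import Mathlib

open Finset

/-- Probability that a Poisson sample with independent inclusion probabilities `p`
equals exactly the subset `S`. -/
noncomputable def sampleProb {X : Type*} [Fintype X] [DecidableEq X]
    (p : X → ℝ) (S : Finset X) : ℝ :=
  (∏ x ∈ S, p x) * ∏ x ∈ Sᶜ, (1 - p x)

open scoped Classical in
/-- Probability of an event of the sample. -/
noncomputable def pprob {X : Type*} [Fintype X] [DecidableEq X]
    (p : X → ℝ) (E : Finset X → Prop) : ℝ :=
  ∑ S : Finset X, if E S then sampleProb p S else 0

section Aux
variable {X : Type*} [Fintype X] [DecidableEq X]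

lemma sampleProb_nonneg {p : X → ℝ} (h0 : ∀ x, 0 ≤ p x) (h1 : ∀ x, p x ≤ 1)
    (S : Finset X) : 0 ≤ sampleProb p S :=
  mul_nonneg (Finset.prod_nonneg fun x _ => h0 x)
    (Finset.prod_nonneg fun x _ => by linarith [h1 x])

lemma sum_sampleProb_mul (p : X → ℝ) (H : Finset X) (c : X → ℝ) :
    ∑ S : Finset X, sampleProb p S * ∏ x ∈ S ∩ H, c x
      = ∏ x ∈ H, (1 - p x + p x * c x) := by
  have key := Finset.prod_add (fun x => p x * (if x ∈ H then c x else 1))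
      (fun x => 1 - p x) (univ : Finset X)
  have h1 : ∀ S : Finset X, sampleProb p S * ∏ x ∈ S ∩ H, c x
      = (∏ x ∈ S, p x * (if x ∈ H then c x else 1)) * ∏ x ∈ univ \ S, (1 - p x) := by
    intro S
    rw [Finset.prod_mul_distrib, ← Finset.prod_ite_mem S H c, sampleProb,
      Finset.compl_eq_univ_sdiff]
    ring
  calc ∑ S : Finset X, sampleProb p S * ∏ x ∈ S ∩ H, c x
      = ∑ S ∈ (univ : Finset X).powerset,
          (∏ x ∈ S, p x * (if x ∈ H then c x else 1)) * ∏ x ∈ univ \ S, (1 - p x) := by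
        rw [Finset.powerset_univ]; exact Finset.sum_congr rfl fun S _ => h1 S
    _ = ∏ x : X, (p x * (if x ∈ H then c x else 1) + (1 - p x)) := key.symm
    _ = ∏ x ∈ H, (1 - p x + p x * c x) := by
        rw [← Finset.prod_subset (Finset.subset_univ H)
          (fun x _ hx => by simp [hx])]
        exact Finset.prod_congr rfl fun x hx => by simp [hx]; ring

lemma pprob_union_le (p : X → ℝ) (h0 : ∀ x, 0 ≤ p x) (h1 : ∀ x, p x ≤ 1)
    (P Q R : Finset X → Prop) (hR : ∀ S, R S → P S ∨ Q S) :
    pprob p R ≤ pprob p P + pprob p Q := by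
  classical
  unfold pprob
  rw [← Finset.sum_add_distrib]
  apply Finset.sum_le_sum
  intro S _
  have hs := sampleProb_nonneg h0 h1 S
  by_cases hr : R S
  · rcases hR S hr with h | h <;> split_ifs <;> simp_all <;> linarith
  · split_ifs <;> simp_all <;> linarith

lemma tail_bound (p gg : X → ℝ) (h0 : ∀ x, 0 ≤ p x) (h1 : ∀ x, p x ≤ 1)
    (H : Finset X) (E : Finset X → Prop) (t r : ℝ)
    (hE : ∀ S, E S → Real.exp (t * r) ≤ Real.exp (t * ∑ x ∈ S ∩ H, gg x / p x)) :
    pprob p E ≤ Real.exp (-(t * r)) *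
      ∏ x ∈ H, (1 - p x + p x * Real.exp (t * (gg x / p x))) := by
  classical
  have key : ∀ S : Finset X, (if E S then sampleProb p S else 0)
      ≤ Real.exp (-(t * r)) *
        (sampleProb p S * ∏ x ∈ S ∩ H, Real.exp (t * (gg x / p x))) := by
    intro S
    have hs := sampleProb_nonneg h0 h1 S
    have hprod : ∏ x ∈ S ∩ H, Real.exp (t * (gg x / p x))
        = Real.exp (t * ∑ x ∈ S ∩ H, gg x / p x) := by
      rw [Finset.mul_sum, Real.exp_sum]
    split_ifs with h
    · have h2 := hE S h
      have h3 : (1:ℝ) ≤ Real.exp (-(t * r)) * Real.exp (t * ∑ x ∈ S ∩ H, gg x / p x) := by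
        rw [← Real.exp_add]
        have : 0 ≤ -(t * r) + t * ∑ x ∈ S ∩ H, gg x / p x := by
          have := Real.exp_le_exp.mp h2; linarith
        calc (1:ℝ) = Real.exp 0 := Real.exp_zero.symm
          _ ≤ _ := Real.exp_le_exp.mpr this
      rw [hprod]
      calc sampleProb p S = sampleProb p S * 1 := (mul_one _).symm
        _ ≤ sampleProb p S * (Real.exp (-(t * r)) *
            Real.exp (t * ∑ x ∈ S ∩ H, gg x / p x)) :=
          mul_le_mul_of_nonneg_left h3 hs
        _ = _ := by ring
    · have : 0 ≤ ∏ x ∈ S ∩ H, Real.exp (t * (gg x / p x)) :=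
        Finset.prod_nonneg fun x _ => (Real.exp_pos _).le
      positivity
  calc pprob p E ≤ ∑ S : Finset X, Real.exp (-(t * r)) *
        (sampleProb p S * ∏ x ∈ S ∩ H, Real.exp (t * (gg x / p x))) :=
      Finset.sum_le_sum fun S _ => key S
    _ = Real.exp (-(t * r)) *
        ∑ S : Finset X, sampleProb p S * ∏ x ∈ S ∩ H, Real.exp (t * (gg x / p x)) := by
      rw [Finset.mul_sum]
    _ = _ := by rw [sum_sampleProb_mul]


lemma N1 (u : ℝ) (hu : |u| ≤ 1) : Real.exp u - 1 - u ≤ 13/18 * u^2 := by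
  have h := Real.exp_bound hu (by norm_num : 0 < 3)
  simp [Finset.sum_range_succ] at h
  norm_num [Nat.factorial] at h
  have h2 := (abs_le.mp h).2
  have h3 : |u|^3 ≤ |u|^2 := pow_le_pow_of_le_one (abs_nonneg u) hu (by norm_num)
  have h4 : |u|^2 = u^2 := sq_abs u
  nlinarith [abs_nonneg u]

lemma N2 : Real.exp (2/3 : ℝ) ≤ 2 := by
  have h1 : Real.exp 1 < 2.7182818286 := Real.exp_one_lt_d9
  have h2 : Real.exp (2/3 : ℝ) ^ 3 = Real.exp 1 ^ 2 := by
    rw [← Real.exp_nat_mul, ← Real.exp_nat_mul]; norm_num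
  by_contra hc
  push_neg at hc
  have h3 : (2:ℝ)^3 < Real.exp (2/3) ^ 3 :=
    pow_lt_pow_left₀ hc (by norm_num) (by norm_num)
  nlinarith [Real.exp_pos (1:ℝ)]

lemma factor_bound (t M gx px : ℝ) (hM : 0 < M) (hgx : 0 ≤ gx)
    (hpx0 : 0 < px) (hpx1 : px ≤ 1) (hw : px < 1 → gx / px ≤ M) :
    1 - px + px * Real.exp (t * (gx / px)) ≤
      Real.exp (t * gx + gx / M * (Real.exp (t * M) - 1 - t * M)) := by
  have hψ : 0 ≤ Real.exp (t * M) - 1 - t * M := by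
    nlinarith [Real.add_one_le_exp (t * M)]
  rcases eq_or_lt_of_le hpx1 with h1 | h1
  · rw [h1]
    simp only [div_one]
    have : Real.exp (t * gx) ≤ Real.exp (t * gx + gx / M * (Real.exp (t * M) - 1 - t * M)) := by
      apply Real.exp_le_exp.mpr
      nlinarith [div_nonneg hgx hM.le]
    linarith
  · have hwM := hw h1
    set w := gx / px with hwdef
    have hw0 : 0 ≤ w := div_nonneg hgx hpx0.le
    have hgw : px * w = gx := by
      rw [hwdef, mul_comm, div_mul_cancel₀ gx hpx0.ne']
    have hl : 0 ≤ w / M := div_nonneg hw0 hM.le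
    have hl2 : w / M ≤ 1 := (div_le_one hM).2 hwM
    have harg : w / M * (t * M) = t * w := by
      rw [div_mul_eq_mul_div, mul_div_assoc, mul_div_assoc, div_self hM.ne', mul_one, mul_comm]
    have hconv : Real.exp (t * w) - 1 - t * w ≤ w / M * (Real.exp (t * M) - 1 - t * M) := by
      have hcx := convexOn_exp.2 (Set.mem_univ (t * M)) (Set.mem_univ (0:ℝ))
        hl (show (0:ℝ) ≤ 1 - w / M by linarith) (show w / M + (1 - w / M) = 1 by ring)
      simp only [smul_eq_mul, mul_zero, add_zero, Real.exp_zero, mul_one] at hcx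
      rw [harg] at hcx
      nlinarith
    have hexp : 1 + (t * gx + gx / M * (Real.exp (t * M) - 1 - t * M)) ≤
        Real.exp (t * gx + gx / M * (Real.exp (t * M) - 1 - t * M)) := by
      linarith [Real.add_one_le_exp (t * gx + gx / M * (Real.exp (t * M) - 1 - t * M))]
    have hmul : px * (Real.exp (t * w) - 1 - t * w) ≤
        px * (w / M * (Real.exp (t * M) - 1 - t * M)) :=
      mul_le_mul_of_nonneg_left hconv hpx0.le
    have hid : px * (w / M) = gx / M := by rw [← mul_div_assoc, hgw]
    have h5 : px * (t * w) = t * gx := by rw [mul_left_comm, hgw]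
    have hmul2 : px * (w / M * (Real.exp (t * M) - 1 - t * M)) =
        gx / M * (Real.exp (t * M) - 1 - t * M) := by rw [← mul_assoc, hid]
    rw [hmul2] at hmul
    have h6 : px * Real.exp (t * w) ≤ px + t * gx + gx / M * (Real.exp (t * M) - 1 - t * M) := by
      nlinarith [hmul, h5]
    linarith

end Aux

set_option maxHeartbeats 1000000 in
/-- Multiplicative Chernoff-type bounds carry over when sampling
with any inclusion probabilities `π` that dominate the Poisson pps probabilities
`min{1, k·f_x / sum(f)}`, using the inverse-probability estimator with `π`. -/
theorem stmt4 {X : Type*} [Fintype X] [DecidableEq X]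
    (f g : X → ℝ) (hf0 : ∀ x, 0 ≤ f x) (hg0 : ∀ x, 0 ≤ g x)
    (hfs : 0 < ∑ x, f x) (hgs : 0 < ∑ x, g x)
    (a b : ℝ) (ha : 0 < a) (hab : a ≤ b)
    (hlow : ∀ x, a * g x ≤ f x) (hhigh : ∀ x, f x ≤ b * g x)
    (k : ℝ) (hk : 0 < k)
    (π : X → ℝ) (hπpos : ∀ x, 0 < π x) (hπle : ∀ x, π x ≤ 1)
    (hπ : ∀ x, min 1 (k * f x / ∑ y, f y) ≤ π x)
    (H : Finset X) (hH : 0 < ∑ x ∈ H, g x)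
    (est : Finset X → ℝ) (hest : ∀ S, est S = ∑ x ∈ S ∩ H, g x / π x) :
    (∀ δ : ℝ, 0 < δ → δ ≤ 1 →
      pprob π (fun S => |est S - ∑ x ∈ H, g x| > δ * ∑ x ∈ H, g x) ≤
        2 * Real.exp (-((∑ x ∈ H, g x) / (∑ x, g x) * k * ((b / a) ^ 2)⁻¹ * δ ^ 2 / 3))) ∧
    (∀ δ : ℝ, 1 < δ →
      pprob π (fun S => est S - ∑ x ∈ H, g x > δ * ∑ x ∈ H, g x) ≤
        Real.exp (-((∑ x ∈ H, g x) / (∑ x, g x) * k * ((b / a) ^ 2)⁻¹ * δ / 3))) := by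
  classical
  set F := ∑ x, f x with hFdef
  set G := ∑ x, g x with hGdef
  set μ := ∑ x ∈ H, g x with hμdef
  have hb : 0 < b := lt_of_lt_of_le ha hab
  have hba1 : 1 ≤ b / a := (one_le_div ha).2 hab
  set M := (b / a) ^ 2 * G / k with hMdef
  have hM : 0 < M := by
    rw [hMdef]; exact div_pos (mul_pos (pow_pos (div_pos hb ha) 2) hgs) hk
  clear_value F G μ M
  have hπ0' : ∀ x, 0 ≤ π x := fun x => (hπpos x).le
  have hcpos : 0 < μ / M := div_pos hH hM
  have hFG : F ≤ b * G := by
    rw [hFdef, hGdef, Finset.mul_sum]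
    exact Finset.sum_le_sum fun x _ => hhigh x
  have hceq : μ / G * k * ((b / a) ^ 2)⁻¹ = μ / M := by
    rw [hMdef]
    field_simp [hgs.ne', hk.ne', ha.ne', hb.ne']
  -- bound on the weights when π x < 1
  have hwM : ∀ x, π x < 1 → g x / π x ≤ M := by
    intro x hx
    have hc : k * f x / F ≤ π x := by
      rcases le_or_gt 1 (k * f x / F) with h | h
      · exfalso
        have h2 := hπ x
        rw [min_eq_left h] at h2
        exact absurd (lt_of_le_of_lt h2 hx) (lt_irrefl 1)
      · have h2 := hπ x
        rwa [min_eq_right h.le] at h2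
    rcases eq_or_lt_of_le (hg0 x) with h0 | h0
    · rw [← h0, zero_div]; exact hM.le
    · have hfx : 0 < f x := lt_of_lt_of_le (mul_pos ha h0) (hlow x)
      have hπx := hπpos x
      have s1 : g x / π x ≤ g x * F / (k * f x) := by
        rw [div_le_div_iff₀ hπx (by positivity)]
        have hkf : k * f x ≤ π x * F := by
          rw [div_le_iff₀ hfs] at hc
          exact hc
        nlinarith [h0.le]
      have s2 : g x * F / (k * f x) ≤ M := by
        rw [div_le_iff₀ (by positivity)]
        rw [hMdef]
        have hexp : (b / a) ^ 2 * G / k * (k * f x) = (b / a) ^ 2 * G * f x := by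
          field_simp [hM.ne', hgs.ne', hk.ne', ha.ne', hb.ne']
        rw [hexp]
        have e1 : g x * F ≤ g x * (b * G) := mul_le_mul_of_nonneg_left hFG (hg0 x)
        have e2 : 1 * b ≤ (b / a) * b := mul_le_mul_of_nonneg_right hba1 hb.le
        have e3 : (b / a) ^ 2 * G * (a * g x) = ((b / a) * b) * G * g x := by
          field_simp [hM.ne', hgs.ne', hk.ne', ha.ne', hb.ne']
        have e4 : (b / a) ^ 2 * G * (a * g x) ≤ (b / a) ^ 2 * G * f x :=
          mul_le_mul_of_nonneg_left (hlow x) (by positivity)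
        nlinarith [mul_nonneg hgs.le (hg0 x)]
      exact s1.trans s2
  -- master Chernoff bound
  have master : ∀ (E : Finset X → Prop) (t r : ℝ),
      (∀ S, E S → Real.exp (t * r) ≤ Real.exp (t * est S)) →
      pprob π E ≤ Real.exp (-(t * r) + t * μ +
        μ / M * (Real.exp (t * M) - 1 - t * M)) := by
    intro E t r hE
    have h1 := tail_bound π g hπ0' hπle H E t r
      (fun S hS => by rw [← hest S]; exact hE S hS)
    refine h1.trans ?_
    have h2 : ∏ x ∈ H, (1 - π x + π x * Real.exp (t * (g x / π x)))
        ≤ ∏ x ∈ H, Real.exp (t * g x + g x / M * (Real.exp (t * M) - 1 - t * M)) := by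
      apply Finset.prod_le_prod
      · intro x _
        have := mul_nonneg (hπpos x).le (Real.exp_pos (t * (g x / π x))).le
        linarith [hπle x]
      · intro x _
        exact factor_bound t M (g x) (π x) hM (hg0 x) (hπpos x) (hπle x) (hwM x)
    have hsum : ∑ x ∈ H, (t * g x + g x / M * (Real.exp (t * M) - 1 - t * M))
        = t * μ + μ / M * (Real.exp (t * M) - 1 - t * M) := by
      rw [Finset.sum_add_distrib, ← Finset.mul_sum, ← Finset.sum_mul, ← Finset.sum_div,
        ← hμdef]
    calc Real.exp (-(t * r)) * ∏ x ∈ H, (1 - π x + π x * Real.exp (t * (g x / π x)))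
        ≤ Real.exp (-(t * r)) *
            ∏ x ∈ H, Real.exp (t * g x + g x / M * (Real.exp (t * M) - 1 - t * M)) :=
          mul_le_mul_of_nonneg_left h2 (Real.exp_pos _).le
      _ = Real.exp (-(t * r) + t * μ + μ / M * (Real.exp (t * M) - 1 - t * M)) := by
          rw [← Real.exp_sum, ← Real.exp_add, hsum, add_assoc]
  constructor
  · -- two-sided bound, 0 < δ ≤ 1
    intro δ hδ0 hδ1
    rw [show μ / G * k * ((b / a) ^ 2)⁻¹ * δ ^ 2 / 3 = μ / M * δ ^ 2 / 3 by
      rw [hceq]]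
    set t₁ : ℝ := 9 * δ / (13 * M) with ht₁def
    set t₂ : ℝ := -(9 * δ / (13 * M)) with ht₂def
    have ht₁0 : 0 ≤ t₁ := by rw [ht₁def]; positivity
    have ht₂0 : t₂ ≤ 0 := by rw [ht₂def]; simp; positivity
    have ht₁M : t₁ * M = 9 * δ / 13 := by rw [ht₁def]; field_simp [hM.ne', hgs.ne', hk.ne', ha.ne', hb.ne']
    have ht₂M : t₂ * M = -(9 * δ / 13) := by rw [ht₂def]; field_simp [hM.ne', hgs.ne', hk.ne', ha.ne', hb.ne']
    clear_value t₁ t₂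
    have habs1 : |t₁ * M| ≤ 1 := by
      rw [ht₁M, abs_of_nonneg (by positivity)]; linarith
    have habs2 : |t₂ * M| ≤ 1 := by
      rw [ht₂M, abs_neg, abs_of_nonneg (by positivity)]; linarith
    have hψ1 := N1 (t₁ * M) habs1
    have hψ2 := N1 (t₂ * M) habs2
    rw [ht₁M] at hψ1
    rw [ht₂M] at hψ2
    have hE1 : -(t₁ * ((1 + δ) * μ)) + t₁ * μ +
        μ / M * (Real.exp (t₁ * M) - 1 - t₁ * M) ≤ -(μ / M * δ ^ 2 / 3) := by
      have h3 : μ / M * (Real.exp (t₁ * M) - 1 - t₁ * M)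
          ≤ μ / M * (13 / 18 * (9 * δ / 13) ^ 2) := by
        rw [ht₁M]
        exact mul_le_mul_of_nonneg_left hψ1 hcpos.le
      have h4 : t₁ * ((1 + δ) * μ) - t₁ * μ = 9 / 13 * δ * δ * (μ / M) := by
        rw [ht₁def]; field_simp [hM.ne', hgs.ne', hk.ne', ha.ne', hb.ne']; ring
      nlinarith [mul_nonneg hcpos.le (sq_nonneg δ)]
    have hE2 : -(t₂ * ((1 - δ) * μ)) + t₂ * μ +
        μ / M * (Real.exp (t₂ * M) - 1 - t₂ * M) ≤ -(μ / M * δ ^ 2 / 3) := by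
      have h3 : μ / M * (Real.exp (t₂ * M) - 1 - t₂ * M)
          ≤ μ / M * (13 / 18 * (9 * δ / 13) ^ 2) := by
        rw [ht₂M]
        refine mul_le_mul_of_nonneg_left ?_ hcpos.le
        nlinarith [hψ2]
      have h4 : t₂ * ((1 - δ) * μ) - t₂ * μ = 9 / 13 * δ * δ * (μ / M) := by
        rw [ht₂def]; field_simp [hM.ne', hgs.ne', hk.ne', ha.ne', hb.ne']; ring
      nlinarith [mul_nonneg hcpos.le (sq_nonneg δ)]
    -- upper tail
    have hP := master (fun S => (1 + δ) * μ < est S) t₁ ((1 + δ) * μ)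
      (fun S hS => Real.exp_le_exp.mpr (mul_le_mul_of_nonneg_left hS.le ht₁0))
    have hQ := master (fun S => est S < (1 - δ) * μ) t₂ ((1 - δ) * μ)
      (fun S hS => Real.exp_le_exp.mpr (mul_le_mul_of_nonpos_left hS.le ht₂0))
    have hPf : pprob π (fun S => (1 + δ) * μ < est S) ≤
        Real.exp (-(μ / M * δ ^ 2 / 3)) :=
      hP.trans (Real.exp_le_exp.mpr hE1)
    have hQf : pprob π (fun S => est S < (1 - δ) * μ) ≤
        Real.exp (-(μ / M * δ ^ 2 / 3)) :=
      hQ.trans (Real.exp_le_exp.mpr hE2)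
    have hsplit := pprob_union_le π hπ0' hπle
      (fun S => (1 + δ) * μ < est S) (fun S => est S < (1 - δ) * μ)
      (fun S => |est S - μ| > δ * μ)
      (by
        intro S hS
        rcases lt_abs.mp hS with h | h
        · left; nlinarith
        · right; nlinarith)
    calc pprob π (fun S => |est S - μ| > δ * μ)
        ≤ pprob π (fun S => (1 + δ) * μ < est S) +
          pprob π (fun S => est S < (1 - δ) * μ) := hsplit
      _ ≤ Real.exp (-(μ / M * δ ^ 2 / 3)) + Real.exp (-(μ / M * δ ^ 2 / 3)) :=
          add_le_add hPf hQf
      _ = 2 * Real.exp (-(μ / M * δ ^ 2 / 3)) := by ring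
  · -- upper tail, δ > 1
    intro δ hδ
    rw [show μ / G * k * ((b / a) ^ 2)⁻¹ * δ / 3 = μ / M * δ / 3 by rw [hceq]]
    set t₃ : ℝ := 2 / (3 * M) with ht₃def
    have ht₃0 : 0 ≤ t₃ := by rw [ht₃def]; positivity
    have ht₃M : t₃ * M = 2 / 3 := by rw [ht₃def]; field_simp [hM.ne', hgs.ne', hk.ne', ha.ne', hb.ne']
    clear_value t₃
    have hP := master (fun S => est S - μ > δ * μ) t₃ ((1 + δ) * μ)
      (fun S hS => Real.exp_le_exp.mpr
        (mul_le_mul_of_nonneg_left (by nlinarith) ht₃0))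
    have hE3 : -(t₃ * ((1 + δ) * μ)) + t₃ * μ +
        μ / M * (Real.exp (t₃ * M) - 1 - t₃ * M) ≤ -(μ / M * δ / 3) := by
      have hψ3 : Real.exp (t₃ * M) - 1 - t₃ * M ≤ 1 / 3 := by
        rw [ht₃M]; linarith [N2]
      have h3 : μ / M * (Real.exp (t₃ * M) - 1 - t₃ * M) ≤ μ / M * (1 / 3) :=
        mul_le_mul_of_nonneg_left hψ3 hcpos.le
      have h4 : t₃ * ((1 + δ) * μ) - t₃ * μ = 2 / 3 * δ * (μ / M) := by
        rw [ht₃def]; field_simp [hM.ne', hgs.ne', hk.ne', ha.ne', hb.ne']; ring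
      nlinarith [mul_nonneg hcpos.le (by linarith : (0:ℝ) ≤ δ - 1)]
    exact hP.trans (Real.exp_le_exp.mpr hE3)
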